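/- Let K be the closed unit disc in ℂ. There is no entire function Φ : ℂ → ℂ with the following property: for every orthogonally additive continuous polynomial P of degree two on C(K) (that is, P = P₁ + P₂ where P_j is an orthogonally additive continuous j-homogeneous polynomial for j = 1, 2) there exists a complex regular Borel measure μ on K such that P(x) = ∫_K Φ(x(t)) dμ(t) for all x ∈ C(K). -/

import Mathlib

open MeasureTheory Filter Topology

/-- The closed unit disc in `ℂ`, as a compact Hausdorff space. -/
abbrev DiscK : Type := ↥(Metric.closedBall (0 : ℂ) 1)

instance : CompactSpace DiscK := isCompact_iff_compactSpace.mp (isCompact_closedBall 0 1)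

/-- `f` is orthogonally additive when it is additive on orthogonal pairs. -/
def IsOrthAdd (f : C(DiscK, ℂ) → ℂ) : Prop :=
  ∀ x y : C(DiscK, ℂ), x * y = 0 → f (x + y) = f x + f y

/-- `P` is a continuous `k`-homogeneous polynomial on `C(DiscK, ℂ)`. -/
def IsHomogPoly (k : ℕ) (P : C(DiscK, ℂ) → ℂ) : Prop :=
  ∃ M : ContinuousMultilinearMap ℂ (fun _ : Fin k => C(DiscK, ℂ)) ℂ,
    ∀ x : C(DiscK, ℂ), P x = M (fun _ => x)

/-- A base point of the disc. -/
def t0 : DiscK := ⟨0, by simp⟩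

/-- Evaluation at `t0` is a continuous 1-homogeneous polynomial. -/
lemma homog1_eval : IsHomogPoly 1 (fun x : C(DiscK, ℂ) => x t0) := by
  refine ⟨ContinuousMultilinearMap.ofSubsingleton ℂ _ _ (0 : Fin 1)
    (ContinuousMap.evalCLM ℂ t0), fun x => ?_⟩
  rfl

lemma homog2_eval : IsHomogPoly 2 (fun x : C(DiscK, ℂ) => x t0 * x t0) := by
  refine ⟨(ContinuousMultilinearMap.mkPiAlgebraFin ℂ 2 ℂ).compContinuousLinearMap
    (fun _ => ContinuousMap.evalCLM ℂ t0), fun x => ?_⟩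
  simp [ContinuousMultilinearMap.mkPiAlgebraFin_apply, List.ofFn_succ]

lemma orthAdd1 : IsOrthAdd (fun x : C(DiscK, ℂ) => x t0) := by
  intro x y _
  simp

lemma orthAdd2 : IsOrthAdd (fun x : C(DiscK, ℂ) => x t0 * x t0) := by
  intro x y h
  have h0 : x t0 * y t0 = 0 := by
    have := DFunLike.congr_fun h t0
    simpa using this
  simp only [ContinuousMap.add_apply]
  linear_combination (2:ℂ) * h0

/-- Zero function is homogeneous of any degree. -/
lemma homog_zero (k : ℕ) : IsHomogPoly k (fun _ : C(DiscK, ℂ) => (0 : ℂ)) :=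
  ⟨0, fun _ => rfl⟩

lemma orthAdd_zero : IsOrthAdd (fun _ : C(DiscK, ℂ) => (0 : ℂ)) := by
  intro x y _; simp

/-- There is no entire function `Φ : ℂ → ℂ` such that every orthogonally
additive continuous polynomial `P = P₁ + P₂` of degree two on `C(K)` (`K` the
closed unit disc) is of the form `P x = ∫_K Φ(x(t)) dμ(t)` for some complex
regular Borel measure `μ` on `K` (encoded in polar form `w · μ` with `μ`
finite positive regular and `w` unimodular). -/
theorem no_universal_entire_factorization :
    ¬ ∃ Φ : ℂ → ℂ, Differentiable ℂ Φ ∧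
      ∀ P₁ P₂ : C(DiscK, ℂ) → ℂ,
        IsHomogPoly 1 P₁ → IsOrthAdd P₁ → IsHomogPoly 2 P₂ → IsOrthAdd P₂ →
        ∃ (μ : Measure DiscK) (w : DiscK → ℂ),
          IsFiniteMeasure μ ∧ μ.Regular ∧ Measurable w ∧ (∀ t, ‖w t‖ = 1) ∧
          ∀ x : C(DiscK, ℂ), P₁ x + P₂ x = ∫ t, Φ (x t) * w t ∂μ := by
  rintro ⟨Φ, -, hΦ⟩
  -- Apply to P₁ = eval at t0, P₂ = 0
  obtain ⟨μ, w, _, _, _, _, h1⟩ :=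
    hΦ (fun x => x t0) (fun _ => 0) homog1_eval orthAdd1 (homog_zero 2) orthAdd_zero
  -- Apply to P₁ = 0, P₂ = eval squared
  obtain ⟨ν, v, _, _, _, _, h2⟩ :=
    hΦ (fun _ => 0) (fun x => x t0 * x t0) (homog_zero 1) orthAdd_zero homog2_eval orthAdd2
  -- Evaluate on constant functions
  have key1 : ∀ c : ℂ, c = Φ c * ∫ t, w t ∂μ := by
    intro c
    have := h1 (ContinuousMap.const _ c)
    simpa [integral_const_mul] using this
  have key2 : ∀ c : ℂ, c * c = Φ c * ∫ t, v t ∂ν := by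
    intro c
    have := h2 (ContinuousMap.const _ c)
    simpa [integral_const_mul] using this
  set A := ∫ t, w t ∂μ
  set B := ∫ t, v t ∂ν
  -- c * B = c * c * A for all c
  have key : ∀ c : ℂ, c * B = c * c * A := by
    intro c
    calc c * B = Φ c * A * B := by rw [← key1 c]
    _ = (Φ c * B) * A := by ring
    _ = c * c * A := by rw [← key2 c]
  have e1 := key 1
  have e2 := key 2
  simp at e1 e2
  -- e1 : B = A, e2 : 2 * B = 4 * A
  rw [e1] at e2
  have hA0 : A = 0 := by linear_combination -e2/2
  have := key1 1
  rw [hA0] at this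
  simp at this
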